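/- Suppose g : ℕ⁺ → ℝ satisfies g(ℓ) ≥ 1 for all ℓ and g(1) = 1, and 0 < C < 4 is a real constant such that for all ℓ ≥ 2, Σ_{i=1}^{ℓ-1} g(ℓ)/(g(i)g(ℓ-i)) ≤ C. Then for any a with C/4 < a < 1, the value A = Σ_{i=1}^∞ a^i/g(i) is a nonnegative real number satisfying A² - C·A + C·a ≤ 0, which is impossible since the discriminant C² - 4Ca is negative. -/

import Mathlib

theorem stmt_4 (g : ℕ → ℝ) (C a : ℝ)
    (hg1 : g 1 = 1) (hg : ∀ ℓ : ℕ, 1 ≤ ℓ → 1 ≤ g ℓ)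
    (hC0 : 0 < C) (hC4 : C < 4)
    (hsum : ∀ ℓ : ℕ, 2 ≤ ℓ → ∑ i ∈ Finset.Ico 1 ℓ, g ℓ / (g i * g (ℓ - i)) ≤ C)
    (ha1 : C / 4 < a) (ha2 : a < 1) :
    0 ≤ (∑' n : ℕ, a ^ (n + 1) / g (n + 1)) ∧
    (∑' n : ℕ, a ^ (n + 1) / g (n + 1)) ^ 2
      - C * (∑' n : ℕ, a ^ (n + 1) / g (n + 1)) + C * a ≤ 0 ∧
    C ^ 2 - 4 * C * a < 0 := by
  have ha0 : 0 < a := lt_trans (by positivity) ha1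
  set f : ℕ → ℝ := fun n => a ^ (n + 1) / g (n + 1) with hf
  have hgpos : ∀ n : ℕ, 0 < g (n + 1) := fun n =>
    lt_of_lt_of_le one_pos (hg (n + 1) (by omega))
  have hfnonneg : ∀ n, 0 ≤ f n := fun n => by
    have := (hgpos n).le
    positivity
  have hfle : ∀ n, f n ≤ a ^ (n + 1) := fun n =>
    div_le_self (by positivity) (hg (n + 1) (by omega))
  have hS : Summable f := by
    apply Summable.of_nonneg_of_le hfnonneg hfle
    have := (summable_geometric_of_lt_one ha0.le ha2).mul_right a
    simpa [pow_succ] using this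
  have hSnorm : Summable fun n => ‖f n‖ := by
    simpa [Real.norm_of_nonneg (hfnonneg _)] using hS
  have hSshift : Summable fun n => f (n + 1) := (summable_nat_add_iff 1).2 hS
  have hA0 : 0 ≤ ∑' n, f n := tsum_nonneg hfnonneg
  refine ⟨hA0, ?_, by nlinarith⟩
  -- Cauchy product
  have hcauchy : (∑' n, f n) ^ 2 =
      ∑' n : ℕ, ∑ p ∈ Finset.HasAntidiagonal.antidiagonal n, f p.1 * f p.2 := by
    rw [sq]
    exact tsum_mul_tsum_eq_tsum_sum_antidiagonal_of_summable_norm hSnorm hSnorm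
  have hkey : ∀ n : ℕ,
      ∑ p ∈ Finset.HasAntidiagonal.antidiagonal n, f p.1 * f p.2 ≤ C * f (n + 1) := by
    intro n
    have h1 : ∑ p ∈ Finset.HasAntidiagonal.antidiagonal n, f p.1 * f p.2
        = ∑ k ∈ Finset.range (n + 1), a ^ (n + 2) / (g (k + 1) * g (n + 1 - k)) := by
      rw [Finset.Nat.sum_antidiagonal_eq_sum_range_succ_mk]
      refine Finset.sum_congr rfl fun k hk => ?_
      simp only [Finset.mem_range, Nat.lt_succ_iff] at hk
      have e1 : n - k + 1 = n + 1 - k := by omega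
      have e2 : k + 1 + (n + 1 - k) = n + 2 := by omega
      simp only [hf]
      rw [div_mul_div_comm, ← pow_add, e1, e2]
    have h2 := hsum (n + 2) (by omega)
    rw [Finset.sum_Ico_eq_sum_range] at h2

    have h2' : ∑ k ∈ Finset.range (n + 1),
        g (n + 2) / (g (k + 1) * g (n + 1 - k)) ≤ C := by
      refine le_trans (le_of_eq (Finset.sum_congr rfl fun k hk => ?_)) h2
      simp only [Finset.mem_range, Nat.lt_succ_iff] at hk
      have e3 : 1 + k = k + 1 := by omega
      have e4 : n + 2 - (k + 1) = n + 1 - k := by omega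
      rw [e3, e4]
    have hgl : 0 < g (n + 2) := hgpos (n + 1)
    have h3 : ∑ k ∈ Finset.range (n + 1),
        (1 : ℝ) / (g (k + 1) * g (n + 1 - k)) ≤ C / g (n + 2) := by
      rw [le_div_iff₀ hgl, Finset.sum_mul]
      refine le_trans (le_of_eq (Finset.sum_congr rfl fun k _ => ?_)) h2'
      rw [one_div, inv_mul_eq_div]
    have h4 : ∑ k ∈ Finset.range (n + 1), a ^ (n + 2) / (g (k + 1) * g (n + 1 - k))
        = a ^ (n + 2) * ∑ k ∈ Finset.range (n + 1), 1 / (g (k + 1) * g (n + 1 - k)) := by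
      rw [Finset.mul_sum]
      exact Finset.sum_congr rfl fun k _ => by ring
    have hfn : f (n + 1) = a ^ (n + 2) / g (n + 2) := rfl
    rw [h1, h4, hfn]
    calc a ^ (n + 2) * ∑ k ∈ Finset.range (n + 1), 1 / (g (k + 1) * g (n + 1 - k))
        ≤ a ^ (n + 2) * (C / g (n + 2)) :=
          mul_le_mul_of_nonneg_left h3 (by positivity)
      _ = C * (a ^ (n + 2) / g (n + 2)) := by ring
  have hRS : Summable fun n => C * f (n + 1) := hSshift.mul_left C
  have hLS : Summable fun n => ∑ p ∈ Finset.HasAntidiagonal.antidiagonal n, f p.1 * f p.2 :=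
    (summable_norm_sum_mul_antidiagonal_of_summable_norm hSnorm hSnorm).of_norm
  have hle := Summable.tsum_le_tsum hkey hLS hRS
  have htail : ∑' n, C * f (n + 1) = C * ((∑' n, f n) - a) := by
    rw [tsum_mul_left]
    have hz := Summable.tsum_eq_zero_add hS
    have hf0 : f 0 = a := by simp [hf, hg1]
    rw [hz, hf0]
    ring
  rw [← hcauchy, htail] at hle
  nlinarith [hle]
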